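/- Two merge forests admit compatible presentations if and only if they have the same number of connected components (i.e., the same eventual cardinality |M(t)| for t large). -/

import Mathlib

open scoped ENNReal NNReal

/-- A persistent set: a functor `ℝ → Set`, with `ℝ` regarded as a poset category. -/
structure PersistentSet where
  obj : ℝ → Type
  map : ∀ {s t : ℝ}, s ≤ t → obj s → obj t
  map_id : ∀ (t : ℝ) (x : obj t), map (le_refl t) x = x
  map_comp : ∀ {s t u : ℝ} (h1 : s ≤ t) (h2 : t ≤ u) (x : obj s),
    map h2 (map h1 x) = map (le_trans h1 h2) x

/-- An `ε`-interleaving between persistent sets `M` and `N`. -/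
def Interleaved (M N : PersistentSet) (ε : ℝ) : Prop :=
  ∃ (hε : 0 ≤ ε) (φ : ∀ t, M.obj t → N.obj (t + ε)) (ψ : ∀ t, N.obj t → M.obj (t + ε)),
    (∀ (s t : ℝ) (h : s ≤ t) (x : M.obj s),
      φ t (M.map h x) = N.map (by linarith : s + ε ≤ t + ε) (φ s x)) ∧
    (∀ (s t : ℝ) (h : s ≤ t) (x : N.obj s),
      ψ t (N.map h x) = M.map (by linarith : s + ε ≤ t + ε) (ψ s x)) ∧
    (∀ (s : ℝ) (x : M.obj s), ψ (s + ε) (φ s x) = M.map (by linarith : s ≤ s + ε + ε) x) ∧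
    (∀ (s : ℝ) (x : N.obj s), φ (s + ε) (ψ s x) = N.map (by linarith : s ≤ s + ε + ε) x)

/-- A persistent set is constructible if it has a finite set of critical values:
it is empty before the first critical value, and the internal maps are
isomorphisms between consecutive critical values. -/
def Constructible (M : PersistentSet) : Prop :=
  ∃ τ : Finset ℝ,
    (∀ t : ℝ, (∀ s ∈ τ, t < s) → IsEmpty (M.obj t)) ∧
    (∀ (s t : ℝ) (h : s ≤ t), (∀ c ∈ τ, c ≤ s ∨ t < c) → Function.Bijective (M.map h))

/-- A merge tree: a constructible persistent set with finite values which is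
eventually a singleton. -/
structure MergeTree where
  toPS : PersistentSet
  constructible : Constructible toPS
  finite : ∀ t, Finite (toPS.obj t)
  eventually_one : ∃ T : ℝ, ∀ t, T ≤ t → (Nonempty (toPS.obj t) ∧ Subsingleton (toPS.obj t))

/-- Combinatorial data of a presentation: `k` generator strands with birth times `γ`,
`l` relation strands with birth times `ρ`, and for each relation two merge maps
`f j`, `g j` into the generators (a map of strands `R_j → G_i` exists iff
`γ i ≤ ρ j`, which is the content of `hf`, `hg`). -/
structure Pres (k l : ℕ) where
  γ : Fin k → ℝ
  ρ : Fin l → ℝ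
  f : Fin l → Fin k
  g : Fin l → Fin k
  hf : ∀ j, γ (f j) ≤ ρ j
  hg : ∀ j, γ (g j) ≤ ρ j

/-- The relation at time `t` identifying the two targets of each relation strand
born by time `t`. -/
def Pres.rel {k l : ℕ} (P : Pres k l) (t : ℝ) :
    {i : Fin k // P.γ i ≤ t} → {i : Fin k // P.γ i ≤ t} → Prop :=
  fun a b => ∃ j : Fin l, P.ρ j ≤ t ∧
    ((P.f j = a.1 ∧ P.g j = b.1) ∨ (P.f j = b.1 ∧ P.g j = a.1))

/-- The persistent set presented by `P`: the pointwise coequalizer of the pair of maps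
`⊔ⱼ Rⱼ ⇉ ⊔ᵢ Gᵢ` of disjoint unions of strands. -/
def Pres.toPS {k l : ℕ} (P : Pres k l) : PersistentSet where
  obj t := Quot (P.rel t)
  map := fun {s t} h =>
    Quot.lift (fun a => Quot.mk (P.rel t) ⟨a.1, le_trans a.2 h⟩)
      (fun a b hab => Quot.sound (by
        obtain ⟨j, hj, hc⟩ := hab
        exact ⟨j, le_trans hj h, hc⟩))
  map_id := fun t x => Quot.inductionOn x fun a => rfl
  map_comp := fun h1 h2 x => Quot.inductionOn x fun a => rfl

/-- An isomorphism of persistent sets: a natural family of bijections. -/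
structure PSIso (M N : PersistentSet) where
  hom : ∀ t, M.obj t → N.obj t
  natural : ∀ {s t : ℝ} (h : s ≤ t) (x : M.obj s), hom t (M.map h x) = N.map h (hom s x)
  bij : ∀ t, Function.Bijective (hom t)

/-- `P` is a presentation of the persistent set `M`. -/
def IsPresentation {k l : ℕ} (P : Pres k l) (M : PersistentSet) : Prop :=
  Nonempty (PSIso P.toPS M)

/-- Two presentations are compatible if their underlying 0-1 presentation matrices agree:
entry `(i,j)` is 1 iff one of the two merge maps of relation `j` lands in generator `i`. -/
def Compatible {k l : ℕ} (P Q : Pres k l) : Prop :=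
  ∀ (i : Fin k) (j : Fin l), (P.f j = i ∨ P.g j = i) ↔ (Q.f j = i ∨ Q.g j = i)

/-- The `ℓp`-norm of a finite vector of reals, `p ∈ [1,∞]`. -/
noncomputable def lpNorm (p : ℝ≥0∞) {n : ℕ} (x : Fin n → ℝ) : ℝ :=
  if p = ⊤ then ⨆ i, |x i| else (∑ i, |x i| ^ p.toReal) ^ (1 / p.toReal)

/-- The difference of the label vectors of two compatible presentations: the vector of
differences of generator birth times followed by differences of relation birth times. -/
noncomputable def labelDiff {k l : ℕ} (P Q : Pres k l) : Fin (k + l) → ℝ :=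
  Fin.append (fun i => P.γ i - Q.γ i) (fun j => P.ρ j - Q.ρ j)

/-- The `p`-presentation semi-distance between merge trees. -/
noncomputable def dHat (p : ℝ≥0∞) (M N : MergeTree) : ℝ :=
  sInf {c | ∃ (k l : ℕ) (P Q : Pres k l), Compatible P Q ∧
    IsPresentation P M.toPS ∧ IsPresentation Q N.toPS ∧
    c = lpNorm p (labelDiff P Q)}

/-- The `p`-presentation distance: the path pseudometric induced by `dHat`. -/
noncomputable def dPres (p : ℝ≥0∞) (M N : MergeTree) : ℝ :=
  sInf {c | ∃ (n : ℕ) (Z : Fin (n + 1) → MergeTree), Z 0 = M ∧ Z (Fin.last n) = N ∧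
    c = ∑ i : Fin n, dHat p (Z i.castSucc) (Z i.succ)}

/-- A merge forest: a constructible persistent set with finite values. -/
structure MergeForest where
  toPS : PersistentSet
  constructible : Constructible toPS
  finite : ∀ t, Finite (toPS.obj t)

/-! ### Auxiliary development -/

attribute [local instance] Classical.propDecidable

namespace ForestsAux

/-- The unordered pair of targets of each relation agrees, core form. -/
lemma compat_core {k l : ℕ} {P Q : Pres k l} (h : Compatible P Q) (j : Fin l) :
    (Q.f j = P.f j ∧ Q.g j = P.g j) ∨ (Q.f j = P.g j ∧ Q.g j = P.f j) := by
  have hf := (h (Q.f j) j).mpr (Or.inl rfl)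
  have hg := (h (Q.g j) j).mpr (Or.inr rfl)
  have h2f := (h (P.f j) j).mp (Or.inl rfl)
  have h2g := (h (P.g j) j).mp (Or.inr rfl)
  rcases hf with hf | hf <;> rcases hg with hg | hg
  · rcases h2g with h2 | h2
    · exact Or.inl ⟨hf.symm, hg.symm.trans (hf.trans h2)⟩
    · exact Or.inl ⟨hf.symm, h2⟩
  · exact Or.inl ⟨hf.symm, hg.symm⟩
  · exact Or.inr ⟨hf.symm, hg.symm⟩
  · rcases h2f with h2 | h2
    · exact Or.inl ⟨h2, hg.symm⟩
    · exact Or.inr ⟨hf.symm, h2⟩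

/-- From compatibility, the unordered pair of targets of each relation agrees. -/
lemma compat_pair_mp {k l : ℕ} {P Q : Pres k l} (h : Compatible P Q) (j : Fin l) (a b : Fin k)
    (hp : (P.f j = a ∧ P.g j = b) ∨ (P.f j = b ∧ P.g j = a)) :
    (Q.f j = a ∧ Q.g j = b) ∨ (Q.f j = b ∧ Q.g j = a) := by
  rcases hp with ⟨ha, hb⟩ | ⟨ha, hb⟩ <;> rcases compat_core h j with ⟨c1, c2⟩ | ⟨c1, c2⟩
  · exact Or.inl ⟨c1.trans ha, c2.trans hb⟩
  · exact Or.inr ⟨c1.trans hb, c2.trans ha⟩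
  · exact Or.inr ⟨c1.trans ha, c2.trans hb⟩
  · exact Or.inl ⟨c1.trans hb, c2.trans ha⟩

/-- At a time past all labels, the quotients of compatible presentations agree. -/
noncomputable def quotEquiv {k l : ℕ} {P Q : Pres k l} (h : Compatible P Q) (t : ℝ)
    (hP : ∀ i, P.γ i ≤ t) (hQ : ∀ i, Q.γ i ≤ t)
    (hPρ : ∀ j, P.ρ j ≤ t) (hQρ : ∀ j, Q.ρ j ≤ t) :
    Quot (P.rel t) ≃ Quot (Q.rel t) where
  toFun := Quot.lift (fun a => Quot.mk (Q.rel t) ⟨a.1, hQ a.1⟩)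
    (fun a b hab => Quot.sound (by
      obtain ⟨j, _, hc⟩ := hab
      exact ⟨j, hQρ j, compat_pair_mp h j a.1 b.1 hc⟩))
  invFun := Quot.lift (fun a => Quot.mk (P.rel t) ⟨a.1, hP a.1⟩)
    (fun a b hab => Quot.sound (by
      obtain ⟨j, _, hc⟩ := hab
      exact ⟨j, hPρ j, compat_pair_mp (fun i j => (h i j).symm) j a.1 b.1 hc⟩))
  left_inv := fun q => Quot.inductionOn q fun a => rfl
  right_inv := fun q => Quot.inductionOn q fun a => rfl

/-! ### The common presentation pattern -/

abbrev genT (m n K : ℕ) := Fin (m + 2) × Fin n × Fin K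
abbrev relT (m n K : ℕ) := Fin (m + 1) × Fin n × Fin K × Fin K

variable {m n K : ℕ}

def src (r : relT m n K) : genT m n K := (⟨r.1.1, by omega⟩, r.2.1, r.2.2.1)
def tgt (r : relT m n K) : genT m n K := (⟨r.1.1 + 1, by have := r.1.2; omega⟩, r.2.1, r.2.2.2)

noncomputable def eG (m n K : ℕ) : Fin (Fintype.card (genT m n K)) ≃ genT m n K :=
  (Fintype.equivFin _).symm

noncomputable def eR (m n K : ℕ) : Fin (Fintype.card (relT m n K)) ≃ relT m n K :=
  (Fintype.equivFin _).symm

noncomputable def mkPres (m n K : ℕ) (γg : genT m n K → ℝ) (ρr : relT m n K → ℝ)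
    (h1 : ∀ r, γg (src r) ≤ ρr r) (h2 : ∀ r, γg (tgt r) ≤ ρr r) :
    Pres (Fintype.card (genT m n K)) (Fintype.card (relT m n K)) where
  γ := fun i => γg (eG m n K i)
  ρ := fun j => ρr (eR m n K j)
  f := fun j => (eG m n K).symm (src (eR m n K j))
  g := fun j => (eG m n K).symm (tgt (eR m n K j))
  hf := fun j => by simpa using h1 (eR m n K j)
  hg := fun j => by simpa using h2 (eR m n K j)

lemma mkPres_compatible (γ1 γ2 : genT m n K → ℝ) (ρ1 ρ2 : relT m n K → ℝ)
    (a1 a2 b1 b2) :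
    Compatible (mkPres m n K γ1 ρ1 a1 b1) (mkPres m n K γ2 ρ2 a2 b2) :=
  fun _ _ => Iff.rfl

/-! ### Build data -/

structure BD (m n K : ℕ) where
  F : PersistentSet
  τF : Finset ℝ
  t : Fin (m + 2) → ℝ
  ht : StrictMono t
  hrange : ∀ c ∈ τF, ∃ i, t i = c
  hempty : ∀ s : ℝ, (∀ u ∈ τF, s < u) → IsEmpty (F.obj s)
  hbij : ∀ (s u : ℝ) (h : s ≤ u), (∀ c ∈ τF, c ≤ s ∨ u < c) → Function.Bijective (F.map h)
  eF : F.obj (t (Fin.last (m + 1))) ≃ Fin n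
  emb : ∀ i, F.obj (t i) → Fin K
  hemb : ∀ i, Function.Injective (emb i)

namespace BD

variable (D : BD m n K)

/-- abbreviation for the top level index -/
abbrev lastI : Fin (m + 2) := Fin.last (m + 1)

lemma t_le_last (i : Fin (m + 2)) : D.t i ≤ D.t (lastI (m := m)) :=
  D.ht.monotone (Fin.le_last i)

/-- the eventual class of an element -/
def cls (i : Fin (m + 2)) (x : D.F.obj (D.t i)) : Fin n :=
  D.eF (D.F.map (D.t_le_last i) x)

lemma cls_map {i j : Fin (m + 2)} (hle : D.t i ≤ D.t j) (x : D.F.obj (D.t i)) :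
    D.cls j (D.F.map hle x) = D.cls i x := by
  unfold cls
  rw [D.F.map_comp]

/-- a generator is real if it is hit by an actual element of the forest -/
def Rl (g : genT m n K) : Prop :=
  ∃ x : D.F.obj (D.t g.1), D.cls g.1 x = g.2.1 ∧ D.emb g.1 x = g.2.2

noncomputable def wit {g : genT m n K} (h : D.Rl g) : D.F.obj (D.t g.1) := h.choose

lemma wit_cls {g : genT m n K} (h : D.Rl g) : D.cls g.1 (D.wit h) = g.2.1 := h.choose_spec.1
lemma wit_emb {g : genT m n K} (h : D.Rl g) : D.emb g.1 (D.wit h) = g.2.2 := h.choose_spec.2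

lemma wit_unique {g : genT m n K} (h : D.Rl g) (x : D.F.obj (D.t g.1))
    (h2 : D.emb g.1 x = g.2.2) : D.wit h = x :=
  D.hemb g.1 (by rw [D.wit_emb h, h2])

noncomputable def γg (g : genT m n K) : ℝ :=
  if D.Rl g then D.t g.1 else D.t (lastI (m := m))

lemma γg_le_last (g : genT m n K) : D.γg g ≤ D.t (lastI (m := m)) := by
  unfold γg; split
  · exact D.t_le_last g.1
  · exact le_refl _

lemma γg_real {g : genT m n K} (h : D.Rl g) : D.γg g = D.t g.1 := if_pos h
lemma γg_fake {g : genT m n K} (h : ¬ D.Rl g) : D.γg g = D.t (lastI (m := m)) := if_neg h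

lemma src_le_tgt (r : relT m n K) : D.t (src r).1 ≤ D.t (tgt r).1 :=
  D.ht.monotone (by simp [src, tgt, Fin.mk_le_mk])

/-- a relation is real if it comes from an actual trajectory of the forest -/
def Re (r : relT m n K) : Prop :=
  ∃ x : D.F.obj (D.t (src r).1), D.cls (src r).1 x = r.2.1 ∧ D.emb (src r).1 x = r.2.2.1 ∧
    D.emb (tgt r).1 (D.F.map (D.src_le_tgt r) x) = r.2.2.2

noncomputable def ρr (r : relT m n K) : ℝ :=
  if D.Re r then D.t (tgt r).1 else D.t (lastI (m := m))

lemma ρr_le_last (r : relT m n K) : D.ρr r ≤ D.t (lastI (m := m)) := by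
  unfold ρr; split
  · exact D.t_le_last _
  · exact le_refl _

lemma Rl_src {r : relT m n K} (h : D.Re r) : D.Rl (src r) := by
  obtain ⟨x, h1, h2, _⟩ := h
  exact ⟨x, h1, h2⟩

lemma Rl_tgt {r : relT m n K} (h : D.Re r) : D.Rl (tgt r) := by
  obtain ⟨x, h1, h2, h3⟩ := h
  refine ⟨D.F.map (D.src_le_tgt r) x, ?_, h3⟩
  rw [D.cls_map]
  show D.cls (src r).1 x = (tgt r).2.1
  rw [h1]; rfl

lemma hf' (r : relT m n K) : D.γg (src r) ≤ D.ρr r := by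
  unfold ρr; split
  · next h => rw [D.γg_real (D.Rl_src h)]; exact D.src_le_tgt r
  · exact D.γg_le_last _

lemma hg' (r : relT m n K) : D.γg (tgt r) ≤ D.ρr r := by
  unfold ρr; split
  · next h => rw [D.γg_real (D.Rl_tgt h)]
  · exact D.γg_le_last _

noncomputable def pres : Pres (Fintype.card (genT m n K)) (Fintype.card (relT m n K)) :=
  mkPres m n K D.γg D.ρr D.hf' D.hg'

lemma pres_γ (i) : D.pres.γ i = D.γg (eG m n K i) := rfl
lemma pres_ρ (j) : D.pres.ρ j = D.ρr (eR m n K j) := rfl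
lemma pres_f (j) : D.pres.f j = (eG m n K).symm (src (eR m n K j)) := rfl
lemma pres_g (j) : D.pres.g j = (eG m n K).symm (tgt (eR m n K j)) := rfl


/-! ### The realization map -/

lemma γg_le_of_t1 {g : genT m n K} {s : ℝ} (hs : D.γg g ≤ s) (h : D.Rl g) :
    D.t g.1 ≤ s := by rwa [D.γg_real h] at hs

lemma γg_le_of_t2 {g : genT m n K} {s : ℝ} (hs : D.γg g ≤ s) (h : ¬ D.Rl g) :
    D.t (lastI (m := m)) ≤ s := by rwa [D.γg_fake h] at hs

noncomputable def val (s : ℝ) (g : genT m n K) (hs : D.γg g ≤ s) : D.F.obj s :=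
  if h : D.Rl g then D.F.map (D.γg_le_of_t1 hs h) (D.wit h)
  else D.F.map (D.γg_le_of_t2 hs h) (D.eF.symm g.2.1)

lemma val_map {s s' : ℝ} (hss' : s ≤ s') (g : genT m n K) (hs : D.γg g ≤ s) :
    D.F.map hss' (D.val s g hs) = D.val s' g (le_trans hs hss') := by
  unfold val
  split <;> rw [D.F.map_comp]

lemma val_real {s : ℝ} {g : genT m n K} (hs : D.γg g ≤ s) (h : D.Rl g)
    (x : D.F.obj (D.t g.1)) (h2 : D.emb g.1 x = g.2.2) (hts : D.t g.1 ≤ s) :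
    D.val s g hs = D.F.map hts x := by
  unfold val
  rw [dif_pos h]
  exact congrArg _ (D.wit_unique h x h2)

lemma val_fake {s : ℝ} {g : genT m n K} (hs : D.γg g ≤ s) (h : ¬ D.Rl g)
    (hts : D.t (lastI (m := m)) ≤ s) :
    D.val s g hs = D.F.map hts (D.eF.symm g.2.1) := by
  unfold val
  rw [dif_neg h]

lemma cls_eq_iff {i : Fin (m + 2)} (x : D.F.obj (D.t i)) (c : Fin n) :
    D.cls i x = c ↔ D.F.map (D.t_le_last i) x = D.eF.symm c := by
  unfold cls
  exact ⟨fun h => by rw [← h, Equiv.symm_apply_apply], fun h => by rw [h, Equiv.apply_symm_apply]⟩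

/-- past the last critical time, the value of a generator only depends on its class -/
lemma val_late {s : ℝ} {g : genT m n K} (hs : D.γg g ≤ s)
    (hts : D.t (lastI (m := m)) ≤ s) :
    D.val s g hs = D.F.map hts (D.eF.symm g.2.1) := by
  by_cases h : D.Rl g
  · rw [D.val_real hs h (D.wit h) (D.wit_emb h) (le_trans (D.t_le_last g.1) hts)]
    rw [← (D.cls_eq_iff (D.wit h) g.2.1).mp (D.wit_cls h), D.F.map_comp]
  · exact D.val_fake hs h hts

lemma val_sound_dir {s : ℝ} (r : relT m n K) (hρ : D.ρr r ≤ s)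
    (h1 : D.γg (src r) ≤ s) (h2 : D.γg (tgt r) ≤ s) :
    D.val s (src r) h1 = D.val s (tgt r) h2 := by
  by_cases hr : D.Re r
  · obtain ⟨x, hc, he, he2⟩ := hr
    have hρ' : D.t (tgt r).1 ≤ s := by
      unfold ρr at hρ; rwa [if_pos ⟨x, hc, he, he2⟩] at hρ
    have hsle : D.t (src r).1 ≤ s := le_trans (D.src_le_tgt r) hρ'
    rw [D.val_real h1 ⟨x, hc, he⟩ x he hsle,
      D.val_real h2 (D.Rl_tgt ⟨x, hc, he, he2⟩) (D.F.map (D.src_le_tgt r) x) he2 hρ',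
      D.F.map_comp]
  · have hρ' : D.t (lastI (m := m)) ≤ s := by
      unfold ρr at hρ; rwa [if_neg hr] at hρ
    rw [D.val_late h1 hρ', D.val_late h2 hρ']
    rfl

lemma val_sound {s : ℝ} {a b : genT m n K} (ha : D.γg a ≤ s) (hb : D.γg b ≤ s)
    (r : relT m n K) (hρ : D.ρr r ≤ s)
    (hab : (src r = a ∧ tgt r = b) ∨ (src r = b ∧ tgt r = a)) :
    D.val s a ha = D.val s b hb := by
  rcases hab with ⟨h1, h2⟩ | ⟨h1, h2⟩
  · subst h1; subst h2; exact D.val_sound_dir r hρ ha hb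
  · subst h1; subst h2; exact (D.val_sound_dir r hρ hb ha).symm

lemma pres_γ_apply (a : Fin (Fintype.card (genT m n K))) :
    D.pres.γ a = D.γg (eG m n K a) := rfl

noncomputable def hom (s : ℝ) : Quot (D.pres.rel s) → D.F.obj s :=
  Quot.lift (fun a => D.val s (eG m n K a.1) a.2)
    (fun a b hab => by
      obtain ⟨j, hρ, hc⟩ := hab
      refine D.val_sound a.2 b.2 (eR m n K j) hρ ?_
      rcases hc with ⟨h1, h2⟩ | ⟨h1, h2⟩
      · refine Or.inl ⟨?_, ?_⟩
        · rw [← h1]; simp [pres_f]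
        · rw [← h2]; simp [pres_g]
      · refine Or.inr ⟨?_, ?_⟩
        · rw [← h1]; simp [pres_f]
        · rw [← h2]; simp [pres_g])

lemma hom_mk (s : ℝ) (a : {i // D.pres.γ i ≤ s}) :
    D.hom s (Quot.mk _ a) = D.val s (eG m n K a.1) a.2 := rfl

lemma hom_natural {s s' : ℝ} (h : s ≤ s') (q : Quot (D.pres.rel s)) :
    D.hom s' (D.pres.toPS.map h q) = D.F.map h (D.hom s q) := by
  refine Quot.inductionOn q fun a => ?_
  show D.hom s' (Quot.mk _ ⟨a.1, le_trans a.2 h⟩) = _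
  rw [hom_mk, hom_mk]
  exact (D.val_map h _ _).symm


/-! ### Canonical quotient elements and chains -/

noncomputable def mkq (s : ℝ) (g : genT m n K) (h : D.γg g ≤ s) : Quot (D.pres.rel s) :=
  Quot.mk _ ⟨(eG m n K).symm g, by simpa [pres_γ_apply] using h⟩

lemma mkq_congr {s : ℝ} {g g' : genT m n K} (e : g = g') (h : D.γg g ≤ s) (h' : D.γg g' ≤ s) :
    D.mkq s g h = D.mkq s g' h' := by subst e; rfl

lemma val_congr {s : ℝ} {g g' : genT m n K} (e : g = g') (h : D.γg g ≤ s) (h' : D.γg g' ≤ s) :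
    D.val s g h = D.val s g' h' := by subst e; rfl

lemma hom_mkq (s : ℝ) (g : genT m n K) (h : D.γg g ≤ s) :
    D.hom s (D.mkq s g h) = D.val s g h := by
  rw [mkq, hom_mk]
  exact D.val_congr (Equiv.apply_symm_apply _ g) _ _

lemma mk_eq_mkq (s : ℝ) (a : {i // D.pres.γ i ≤ s}) :
    Quot.mk (D.pres.rel s) a = D.mkq s (eG m n K a.1) a.2 :=
  congrArg _ (Subtype.ext (by simp [mkq]))

lemma mkq_step (s : ℝ) (r : relT m n K) (hρ : D.ρr r ≤ s)
    (h1 : D.γg (src r) ≤ s) (h2 : D.γg (tgt r) ≤ s) :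
    D.mkq s (src r) h1 = D.mkq s (tgt r) h2 :=
  Quot.sound ⟨(eR m n K).symm r, by simpa [pres_ρ] using hρ,
    Or.inl ⟨by simp [pres_f], by simp [pres_g]⟩⟩

def canon (i : Fin (m + 2)) (x : D.F.obj (D.t i)) : genT m n K := (i, D.cls i x, D.emb i x)

lemma Rl_canon (i : Fin (m + 2)) (x : D.F.obj (D.t i)) : D.Rl (D.canon i x) := ⟨x, rfl, rfl⟩

lemma γg_canon (i : Fin (m + 2)) (x : D.F.obj (D.t i)) : D.γg (D.canon i x) = D.t i :=
  D.γg_real (D.Rl_canon i x)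

lemma val_canon {s : ℝ} (i : Fin (m + 2)) (x : D.F.obj (D.t i)) (hγ : D.γg (D.canon i x) ≤ s)
    (hti : D.t i ≤ s) : D.val s (D.canon i x) hγ = D.F.map hti x :=
  D.val_real hγ (D.Rl_canon i x) x rfl hti

/-- chaining a real generator up to the canonical generator at a level `i` above it -/
lemma chain_early (s : ℝ) (i : Fin (m + 2)) (hti : D.t i ≤ s) :
    ∀ d : ℕ, ∀ g : genT m n K, ∀ hr : D.Rl g, g.1.1 + d = i.1 →
      ∀ hγ : D.γg g ≤ s, ∀ hle : D.t g.1 ≤ D.t i,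
      D.mkq s g hγ = D.mkq s (D.canon i (D.F.map hle (D.wit hr)))
        (by rw [D.γg_canon]; exact hti) := by
  intro d
  induction d with
  | zero =>
    intro g hr hd hγ hle
    obtain ⟨⟨gv, hgv⟩, gc, ga⟩ := g
    have hgi : (⟨gv, hgv⟩ : Fin (m + 2)) = i := Fin.ext (by simpa using hd)
    subst hgi
    have hX : D.F.map hle (D.wit hr) = D.wit hr := D.F.map_id _ _
    refine D.mkq_congr ?_ _ _
    show _ = D.canon _ _
    rw [hX]
    unfold canon
    rw [D.wit_cls hr, D.wit_emb hr]
  | succ d ih =>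
    intro g hr hd hγ hle
    obtain ⟨⟨gv, hgv⟩, gc, ga⟩ := g
    have hd' : gv + (d + 1) = (i : ℕ) := hd
    have hgv1 : gv < m + 1 := by have := i.2; omega
    have hst : D.t (⟨gv, hgv⟩ : Fin (m + 2)) ≤ D.t ⟨gv + 1, by omega⟩ :=
      D.ht.monotone (by simp [Fin.mk_le_mk])
    set x := D.wit hr with hxdef
    let r : relT m n K := (⟨gv, hgv1⟩, gc, ga, D.emb ⟨gv + 1, by omega⟩ (D.F.map hst x))
    have hsrc : src r = (⟨⟨gv, hgv⟩, gc, ga⟩ : genT m n K) := rfl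
    have hre : D.Re r := ⟨x, D.wit_cls hr, D.wit_emb hr, rfl⟩
    have hρ : D.ρr r ≤ s := by
      unfold ρr
      rw [if_pos hre]
      exact le_trans (D.ht.monotone (show (tgt r).1 ≤ i by
        simp only [tgt, Fin.mk_le_mk, Fin.le_def, r]; omega)) hti
    have hγt : D.γg (tgt r) ≤ s := by
      rw [D.γg_real (D.Rl_tgt hre)]
      exact le_trans (D.ht.monotone (show (tgt r).1 ≤ i by
        simp only [tgt, Fin.mk_le_mk, Fin.le_def, r]; omega)) hti
    have step : D.mkq s (⟨⟨gv, hgv⟩, gc, ga⟩ : genT m n K) hγ = D.mkq s (tgt r) hγt :=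
      D.mkq_step s r hρ hγ hγt
    rw [step]
    have hle' : D.t (tgt r).1 ≤ D.t i := D.ht.monotone (by
      simp only [tgt, Fin.le_def, r]; omega)
    have hd' : (tgt r).1.1 + d = i.1 := by show gv + 1 + d = i.1; omega
    rw [ih (tgt r) (D.Rl_tgt hre) hd' hγt hle']
    refine D.mkq_congr (congrArg (D.canon i) ?_) _ _
    have hw : D.wit (D.Rl_tgt hre) = D.F.map hst x := D.wit_unique _ _ rfl
    rw [hw]
    exact D.F.map_comp hst hle' x

def gRep (c : Fin n) : genT m n K := (lastI (m := m), c, D.emb _ (D.eF.symm c))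

lemma Rl_gRep (c : Fin n) : D.Rl (D.gRep c) := by
  refine ⟨D.eF.symm c, ?_, rfl⟩
  have h1 : D.F.map (D.t_le_last (lastI (m := m))) (D.eF.symm c) = D.eF.symm c :=
    D.F.map_id _ _
  unfold cls
  exact (congrArg D.eF h1).trans (D.eF.apply_symm_apply c)

lemma γg_any_le {s : ℝ} (hl : D.t (lastI (m := m)) ≤ s) (g : genT m n K) : D.γg g ≤ s :=
  le_trans (D.γg_le_last g) hl

/-- past the last level, every generator chains to the representative of its class -/
lemma chain_late (s : ℝ) (hl : D.t (lastI (m := m)) ≤ s) :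
    ∀ d : ℕ, ∀ g : genT m n K, g.1.1 + d = m + 1 →
      ∀ hγ : D.γg g ≤ s, ∀ hγ' : D.γg (D.gRep g.2.1) ≤ s,
      D.mkq s g hγ = D.mkq s (D.gRep g.2.1) hγ' := by
  intro d
  induction d with
  | zero =>
    intro g hd hγ hγ'
    obtain ⟨⟨gv, hgv⟩, gc, ga⟩ := g
    have hgv' : gv = m + 1 := by simpa using hd
    subst hgv'
    set b := D.emb (lastI (m := m)) (D.eF.symm gc) with hb
    let r1 : relT m n K := (⟨m, by omega⟩, gc, b, ga)
    let r2 : relT m n K := (⟨m, by omega⟩, gc, b, b)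
    have e1 : tgt r1 = (⟨⟨m + 1, hgv⟩, gc, ga⟩ : genT m n K) := rfl
    have e2 : tgt r2 = D.gRep gc := rfl
    have hγs : D.γg (src r1) ≤ s := D.γg_any_le hl _
    calc D.mkq s (⟨⟨m + 1, hgv⟩, gc, ga⟩ : genT m n K) hγ
        = D.mkq s (tgt r1) (D.γg_any_le hl _) := D.mkq_congr e1.symm _ _
      _ = D.mkq s (src r1) hγs := (D.mkq_step s r1 (le_trans (D.ρr_le_last r1) hl) _ _).symm
      _ = D.mkq s (tgt r2) (D.γg_any_le hl _) := D.mkq_step s r2 (le_trans (D.ρr_le_last r2) hl) _ _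
      _ = D.mkq s (D.gRep gc) hγ' := D.mkq_congr e2 _ _
  | succ d ih =>
    intro g hd hγ hγ'
    obtain ⟨⟨gv, hgv⟩, gc, ga⟩ := g
    have hd' : gv + (d + 1) = m + 1 := hd
    have hgv1 : gv < m + 1 := by omega
    let r : relT m n K := (⟨gv, hgv1⟩, gc, ga, ga)
    have e1 : src r = (⟨⟨gv, hgv⟩, gc, ga⟩ : genT m n K) := rfl
    have step : D.mkq s (⟨⟨gv, hgv⟩, gc, ga⟩ : genT m n K) hγ
        = D.mkq s (tgt r) (D.γg_any_le hl _) :=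
      D.mkq_step s r (le_trans (D.ρr_le_last r) hl) hγ _
    rw [step]
    exact ih (tgt r) (by show gv + 1 + d = m + 1; omega) _ _

/-! ### Bijectivity -/

lemma t0_le_γg (g : genT m n K) : D.t 0 ≤ D.γg g := by
  unfold γg; split <;> exact D.ht.monotone (Fin.zero_le _)

lemma hom_bij (s : ℝ) : Function.Bijective (D.hom s) := by
  rcases lt_or_ge s (D.t 0) with h0 | h0
  · have hM : IsEmpty (D.F.obj s) := D.hempty s (fun u hu => by
      obtain ⟨iu, rfl⟩ := D.hrange u hu
      exact lt_of_lt_of_le h0 (D.ht.monotone (Fin.zero_le iu)))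
    have hQ : IsEmpty (Quot (D.pres.rel s)) := ⟨fun q => Quot.inductionOn q (fun a => by
      have : D.γg (eG m n K a.1) ≤ s := a.2
      exact absurd (le_trans (D.t0_le_γg _) this) (not_le.mpr h0))⟩
    exact ⟨fun a b _ => hQ.elim a, fun y => hM.elim y⟩
  · -- the maximal level below s
    have h0m : (0 : Fin (m + 2)) ∈ Finset.univ.filter (fun i : Fin (m + 2) => D.t i ≤ s) := by
      simp [h0]
    set SS := Finset.univ.filter (fun i : Fin (m + 2) => D.t i ≤ s) with hSS
    let i := SS.max' ⟨0, h0m⟩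
    have hti : D.t i ≤ s := (Finset.mem_filter.mp (SS.max'_mem ⟨0, h0m⟩)).2
    have himax : ∀ j : Fin (m + 2), D.t j ≤ s → j ≤ i :=
      fun j hj => SS.le_max' j (Finset.mem_filter.mpr ⟨Finset.mem_univ _, hj⟩)
    have hbi : Function.Bijective (D.F.map hti) := D.hbij _ _ hti (fun c hc => by
      obtain ⟨jc, rfl⟩ := D.hrange c hc
      rcases le_or_gt (D.t jc) s with h | h
      · exact Or.inl (D.ht.monotone (himax jc h))
      · exact Or.inr h)
    constructor
    · -- injectivity
      intro q1 q2
      refine Quot.inductionOn q1 fun a => Quot.inductionOn q2 fun b => fun hab => ?_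
      rw [D.mk_eq_mkq s a, D.mk_eq_mkq s b] at hab ⊢
      replace hab := (D.hom_mkq s _ a.2).symm.trans (hab.trans (D.hom_mkq s _ b.2))
      have ha2 : D.γg (eG m n K a.1) ≤ s := a.2
      have hb2 : D.γg (eG m n K b.1) ≤ s := b.2
      change D.val s (eG m n K a.1) ha2 = D.val s (eG m n K b.1) hb2 at hab
      change D.mkq s (eG m n K a.1) ha2 = D.mkq s (eG m n K b.1) hb2
      rcases le_or_gt (D.t (lastI (m := m))) s with hl | hl
      · -- late regime
        rw [D.val_late _ hl, D.val_late _ hl] at hab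
        have hbl : Function.Bijective (D.F.map hl) := D.hbij _ _ hl (fun c hc => by
          obtain ⟨jc, rfl⟩ := D.hrange c hc
          exact Or.inl (D.t_le_last jc))
        have hc : (eG m n K a.1).2.1 = (eG m n K b.1).2.1 :=
          D.eF.symm.injective (hbl.1 hab)
        rw [D.chain_late s hl ((m + 1) - (eG m n K a.1).1.1) (eG m n K a.1)
            (by have := (eG m n K a.1).1.2; omega) _ (D.γg_any_le hl _),
          D.chain_late s hl ((m + 1) - (eG m n K b.1).1.1) (eG m n K b.1)
            (by have := (eG m n K b.1).1.2; omega) _ (D.γg_any_le hl _)]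
        exact D.mkq_congr (congrArg D.gRep hc) _ _
      · -- early regime: all active generators are real
        have hra : D.Rl (eG m n K a.1) := by
          by_contra hn
          have := D.γg_fake hn
          have h2 : D.γg (eG m n K a.1) ≤ s := a.2
          rw [this] at h2
          exact absurd h2 (not_le.mpr hl)
        have hrb : D.Rl (eG m n K b.1) := by
          by_contra hn
          have := D.γg_fake hn
          have h2 : D.γg (eG m n K b.1) ≤ s := b.2
          rw [this] at h2
          exact absurd h2 (not_le.mpr hl)
        have hlea : D.t (eG m n K a.1).1 ≤ D.t i := D.ht.monotone (himax _ (by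
          have h2 : D.γg (eG m n K a.1) ≤ s := a.2
          rwa [D.γg_real hra] at h2))
        have hleb : D.t (eG m n K b.1).1 ≤ D.t i := D.ht.monotone (himax _ (by
          have h2 : D.γg (eG m n K b.1) ≤ s := b.2
          rwa [D.γg_real hrb] at h2))
        -- compute the values through level i
        have hva : D.val s (eG m n K a.1) a.2
            = D.F.map hti (D.F.map hlea (D.wit hra)) := by
          rw [D.val_real a.2 hra (D.wit hra) (D.wit_emb hra)
            (le_trans hlea hti), D.F.map_comp]
        have hvb : D.val s (eG m n K b.1) b.2
            = D.F.map hti (D.F.map hleb (D.wit hrb)) := by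
          rw [D.val_real b.2 hrb (D.wit hrb) (D.wit_emb hrb)
            (le_trans hleb hti), D.F.map_comp]
        rw [hva, hvb] at hab
        have hx : D.F.map hlea (D.wit hra) = D.F.map hleb (D.wit hrb) := hbi.1 hab
        have hda : (eG m n K a.1).1.1 + (i.1 - (eG m n K a.1).1.1) = i.1 := by
          have : (eG m n K a.1).1 ≤ i := himax _ (by
            have h2 : D.γg (eG m n K a.1) ≤ s := a.2
            rwa [D.γg_real hra] at h2)
          have := Fin.le_def.mp this
          omega
        have hdb : (eG m n K b.1).1.1 + (i.1 - (eG m n K b.1).1.1) = i.1 := by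
          have : (eG m n K b.1).1 ≤ i := himax _ (by
            have h2 : D.γg (eG m n K b.1) ≤ s := b.2
            rwa [D.γg_real hrb] at h2)
          have := Fin.le_def.mp this
          omega
        rw [D.chain_early s i hti _ _ hra hda _ hlea,
          D.chain_early s i hti _ _ hrb hdb _ hleb]
        exact D.mkq_congr (congrArg (D.canon i) hx) _ _
    · -- surjectivity
      intro y
      obtain ⟨x, rfl⟩ := hbi.2 y
      refine ⟨D.mkq s (D.canon i x) (by rw [D.γg_canon]; exact hti), ?_⟩
      rw [D.hom_mkq]
      exact D.val_canon i x _ hti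

theorem isPres : IsPresentation D.pres D.F :=
  ⟨{ hom := D.hom
     natural := fun h x => D.hom_natural h x
     bij := D.hom_bij }⟩

end BD

end ForestsAux
/-- two merge forests admit compatible presentations if and only if they
have the same number of connected components, i.e. the same eventual cardinality
`|M(t)|` for large `t`. -/
theorem forests_compatible_iff_same_components (M N : MergeForest) :
    (∃ (k l : ℕ) (P Q : Pres k l), Compatible P Q ∧
      IsPresentation P M.toPS ∧ IsPresentation Q N.toPS) ↔
    (∃ T : ℝ, ∀ t, T ≤ t → Nat.card (M.toPS.obj t) = Nat.card (N.toPS.obj t)) := by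
  constructor
  · rintro ⟨k, l, P, Q, hc, ⟨iP⟩, ⟨iQ⟩⟩
    obtain ⟨T1, h1⟩ := Finite.exists_le P.γ
    obtain ⟨T2, h2⟩ := Finite.exists_le Q.γ
    obtain ⟨T3, h3⟩ := Finite.exists_le P.ρ
    obtain ⟨T4, h4⟩ := Finite.exists_le Q.ρ
    refine ⟨max (max T1 T2) (max T3 T4), fun t ht => ?_⟩
    have e1 : Nat.card (M.toPS.obj t) = Nat.card (Quot (P.rel t)) :=
      (Nat.card_congr (Equiv.ofBijective _ (iP.bij t))).symm
    have e2 : Nat.card (N.toPS.obj t) = Nat.card (Quot (Q.rel t)) :=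
      (Nat.card_congr (Equiv.ofBijective _ (iQ.bij t))).symm
    have e3 : Nat.card (Quot (P.rel t)) = Nat.card (Quot (Q.rel t)) :=
      Nat.card_congr (ForestsAux.quotEquiv hc t
        (fun i => le_trans (h1 i) (le_trans (le_trans (le_max_left _ _) (le_max_left _ _)) ht))
        (fun i => le_trans (h2 i) (le_trans (le_trans (le_max_right _ _) (le_max_left _ _)) ht))
        (fun j => le_trans (h3 j) (le_trans (le_trans (le_max_left _ _) (le_max_right _ _)) ht))
        (fun j => le_trans (h4 j) (le_trans (le_trans (le_max_right _ _) (le_max_right _ _)) ht)))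
    rw [e1, e2, e3]
  · rintro ⟨T, hT⟩
    obtain ⟨τM, hM1, hM2⟩ := M.constructible
    obtain ⟨τN, hN1, hN2⟩ := N.constructible
    obtain ⟨C, hC⟩ := Finset.exists_le (τM ∪ τN)
    set B : ℝ := max T C + 1 with hB
    set S : Finset ℝ := insert B (insert (B + 1) (τM ∪ τN)) with hS
    have hBmem : B ∈ S := Finset.mem_insert_self _ _
    have hB1mem : B + 1 ∈ S := Finset.mem_insert_of_mem (Finset.mem_insert_self _ _)
    have hpair : ({B, B + 1} : Finset ℝ) ⊆ S := by
      intro x hx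
      rcases Finset.mem_insert.mp hx with rfl | hx
      · exact hBmem
      · rw [Finset.mem_singleton.mp hx]; exact hB1mem
    have hcard : 2 ≤ S.card := by
      have h2 : ({B, B + 1} : Finset ℝ).card = 2 :=
        Finset.card_pair (ne_of_lt (lt_add_one B))
      rw [← h2]
      exact Finset.card_le_card hpair
    have hcard' : S.card = (S.card - 2) + 2 := by omega
    set m := S.card - 2 with hm
    let o : Fin (m + 2) ≃o {x // x ∈ S} := S.orderIsoOfFin hcard'
    set t : Fin (m + 2) → ℝ := fun i => ((o i : {x // x ∈ S}) : ℝ) with htdef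
    have ht : StrictMono t := fun a b h => Subtype.coe_lt_coe.mpr (o.strictMono h)
    have hrange : ∀ c ∈ S, ∃ i, t i = c := fun c hc =>
      ⟨o.symm ⟨c, hc⟩, by simp [htdef]⟩
    have hlast_ge : ∀ c ∈ S, c ≤ t (Fin.last (m + 1)) := fun c hc => by
      obtain ⟨i, rfl⟩ := hrange c hc
      exact ht.monotone (Fin.le_last i)
    have hTle : T ≤ t (Fin.last (m + 1)) :=
      le_trans (le_trans (le_max_left T C) (le_of_lt (lt_add_one _))) (hlast_ge B hBmem)
    have hcritM : ∀ c ∈ τM, c ∈ S := fun c hc =>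
      Finset.mem_insert_of_mem (Finset.mem_insert_of_mem (Finset.mem_union_left _ hc))
    have hcritN : ∀ c ∈ τN, c ∈ S := fun c hc =>
      Finset.mem_insert_of_mem (Finset.mem_insert_of_mem (Finset.mem_union_right _ hc))
    haveI : ∀ s, Finite (M.toPS.obj s) := M.finite
    haveI : ∀ s, Finite (N.toPS.obj s) := N.finite
    set n := Nat.card (M.toPS.obj (t (Fin.last (m + 1)))) with hn
    have hncard : Nat.card (N.toPS.obj (t (Fin.last (m + 1)))) = n := (hT _ hTle).symm
    let eM : M.toPS.obj (t (Fin.last (m + 1))) ≃ Fin n := Finite.equivFin _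
    let eN : N.toPS.obj (t (Fin.last (m + 1))) ≃ Fin n :=
      (Finite.equivFin _).trans (finCongr hncard)
    set K := max (Finset.univ.sup fun i : Fin (m + 2) => Nat.card (M.toPS.obj (t i)))
      (Finset.univ.sup fun i : Fin (m + 2) => Nat.card (N.toPS.obj (t i))) with hK
    have hKM : ∀ i, Nat.card (M.toPS.obj (t i)) ≤ K := fun i => by
      have h := Finset.le_sup (f := fun i : Fin (m + 2) => Nat.card (M.toPS.obj (t i)))
        (Finset.mem_univ i)
      exact le_trans h (le_max_left _ _)
    have hKN : ∀ i, Nat.card (N.toPS.obj (t i)) ≤ K := fun i => by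
      have h := Finset.le_sup (f := fun i : Fin (m + 2) => Nat.card (N.toPS.obj (t i)))
        (Finset.mem_univ i)
      exact le_trans h (le_max_right _ _)
    let embM : ∀ i, M.toPS.obj (t i) → Fin K := fun i x =>
      Fin.castLE (hKM i) (Finite.equivFin _ x)
    let embN : ∀ i, N.toPS.obj (t i) → Fin K := fun i x =>
      Fin.castLE (hKN i) (Finite.equivFin _ x)
    have hembM : ∀ i, Function.Injective (embM i) := fun i a b h =>
      (Finite.equivFin _).injective (Fin.castLE_injective _ h)
    have hembN : ∀ i, Function.Injective (embN i) := fun i a b h =>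
      (Finite.equivFin _).injective (Fin.castLE_injective _ h)
    let DM : ForestsAux.BD m n K :=
      { F := M.toPS, τF := τM, t := t, ht := ht
        hrange := fun c hc => hrange c (hcritM c hc)
        hempty := hM1, hbij := hM2, eF := eM, emb := embM, hemb := hembM }
    let DN : ForestsAux.BD m n K :=
      { F := N.toPS, τF := τN, t := t, ht := ht
        hrange := fun c hc => hrange c (hcritN c hc)
        hempty := hN1, hbij := hN2, eF := eN, emb := embN, hemb := hembN }
    exact ⟨_, _, DM.pres, DN.pres, fun i j => Iff.rfl, DM.isPres, DN.isPres⟩
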